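/- (Error decomposition for the estimated context kernel.) Assume every emission probability of the true model satisfies q(y|s) ≤ κ/n for all y ∈ X and s ∈ S, where n = |X| and κ > 0. Then for every x ∈ X, a ∈ A, and V : X → ℝ: | Σ_{y∈X} ( P̃(y|x,a) − P̂(y|x,a) )·V(y) | ≤ max_{s∈S} ‖p̂(·|s,a) − p(·|s,a)‖₁ · ‖V‖_∞ + max_{s∈S} | Σ_{y∈X} ( q̂(y|s) − q(y|s) )·V(y) | + (κ·|E|/n)·‖V‖_∞, where E := { y ∈ X : f̂(y) ≠ f(y) } is the set of misclassified contexts, ‖p̂(·|s,a) − p(·|s,a)‖₁ := Σ_{s'∈S} |p̂(s'|s,a) − p(s'|s,a)| and ‖V‖_∞ := max_y |V(y)|. -/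
import Mathlib


open Finset

/-- Sup norm of a function on a finite nonempty type. -/
noncomputable def supNorm {Z : Type*} [Fintype Z] [Nonempty Z] (φ : Z → ℝ) : ℝ :=
  Finset.univ.sup' Finset.univ_nonempty fun z => |φ z|

/-- **Error decomposition for the estimated context kernel.**
True model: decoding function `f`, latent transitions `p s a s' = p(s'|s,a)`, emissions
`q s y = q(y|s)` supported on the fibers of `f` and bounded by `κ/n` where
`n = Fintype.card X`.  Estimated model: decoding function `fhat`, nonnegative `phat`,
and `qhat` supported on the fibers of `fhat` with `Σ_y qhat(y|s) ≤ 1`.  The two kernels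
are `P̃(y|x,a) = q(y|f̂(y))·p(f̂(y)|f̂(x),a)` and `P̂(y|x,a) = q̂(y|f̂(y))·p̂(f̂(y)|f̂(x),a)`,
and `E = {y : f̂(y) ≠ f(y)}` is the set of misclassified contexts. -/
theorem estimated_kernel_error_decomposition
    {X S A : Type*} [Fintype X] [Fintype S] [Fintype A]
    [Nonempty X] [Nonempty S] [DecidableEq S]
    (f : X → S) (hf : Function.Surjective f)
    (p : S → A → S → ℝ) (hp : ∀ s a, (∀ s', 0 ≤ p s a s') ∧ ∑ s', p s a s' = 1)
    (q : S → X → ℝ)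
    (hq : ∀ s, (∀ y, 0 ≤ q s y) ∧ (∀ y, f y ≠ s → q s y = 0) ∧ ∑ y, q s y = 1)
    (κ : ℝ) (hκ : 0 < κ)
    (hqbound : ∀ (s : S) (y : X), q s y ≤ κ / (Fintype.card X : ℝ))
    (fhat : X → S)
    (phat : S → A → S → ℝ) (hphat : ∀ s a s', 0 ≤ phat s a s')
    (qhat : S → X → ℝ)
    (hqhat : ∀ s, (∀ y, 0 ≤ qhat s y) ∧ (∀ y, fhat y ≠ s → qhat s y = 0) ∧
      ∑ y, qhat s y ≤ 1)
    (x : X) (a : A) (V : X → ℝ) :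
    |∑ y, (q (fhat y) y * p (fhat x) a (fhat y)
            - qhat (fhat y) y * phat (fhat x) a (fhat y)) * V y|
      ≤ (Finset.univ.sup' Finset.univ_nonempty fun s : S =>
            ∑ s', |phat s a s' - p s a s'|) * supNorm V
        + (Finset.univ.sup' Finset.univ_nonempty fun s : S =>
            |∑ y, (qhat s y - q s y) * V y|)
        + κ * ((Finset.univ.filter fun y => fhat y ≠ f y).card : ℝ)
            / (Fintype.card X : ℝ) * supNorm V := by
  classical
  set n : ℝ := (Fintype.card X : ℝ) with hn
  have hn0 : 0 < n := by
    rw [hn]; exact_mod_cast Fintype.card_pos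
  set E := (Finset.univ.filter fun y => fhat y ≠ f y) with hEdef
  set Mp := (Finset.univ.sup' Finset.univ_nonempty fun s : S =>
      ∑ s', |phat s a s' - p s a s'|) with hMp
  set Mq := (Finset.univ.sup' Finset.univ_nonempty fun s : S =>
      |∑ y, (qhat s y - q s y) * V y|) with hMq
  have hVle : ∀ y, |V y| ≤ supNorm V := fun y =>
    Finset.le_sup' (fun z => |V z|) (Finset.mem_univ y)
  have hV0 : 0 ≤ supNorm V :=
    le_trans (abs_nonneg _) (hVle (Classical.arbitrary X))
  have hC0 : 0 ≤ κ * (E.card : ℝ) / n * supNorm V := by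
    apply mul_nonneg _ hV0
    apply div_nonneg (mul_nonneg hκ.le (Nat.cast_nonneg _)) hn0.le
  -- fiberwise rewriting
  have hfib : ∀ (F : S → X → ℝ), ∑ y, F (fhat y) y
      = ∑ s', ∑ y ∈ Finset.univ.filter fun y => fhat y = s', F s' y := by
    intro F
    rw [← Finset.sum_fiberwise Finset.univ fhat (fun y => F (fhat y) y)]
    refine Finset.sum_congr rfl fun s' _ => Finset.sum_congr rfl fun y hy => ?_
    rw [(Finset.mem_filter.mp hy).2]
  -- decomposition
  have key : ∑ y, (q (fhat y) y * p (fhat x) a (fhat y)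
        - qhat (fhat y) y * phat (fhat x) a (fhat y)) * V y
      = (∑ s', p (fhat x) a s' *
          ∑ y ∈ Finset.univ.filter fun y => fhat y = s', (q s' y - qhat s' y) * V y)
        + ∑ s', (p (fhat x) a s' - phat (fhat x) a s') *
          ∑ y ∈ Finset.univ.filter fun y => fhat y = s', qhat s' y * V y := by
    rw [hfib (fun s' y => (q s' y * p (fhat x) a s' - qhat s' y * phat (fhat x) a s') * V y),
      ← Finset.sum_add_distrib]
    refine Finset.sum_congr rfl fun s' _ => ?_
    rw [Finset.mul_sum, Finset.mul_sum, ← Finset.sum_add_distrib]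
    exact Finset.sum_congr rfl fun y _ => by ring
  -- bound for the transition-error term
  have hBin : ∀ s' : S,
      |∑ y ∈ Finset.univ.filter fun y => fhat y = s', qhat s' y * V y| ≤ supNorm V := by
    intro s'
    have h1 : |∑ y ∈ Finset.univ.filter fun y => fhat y = s', qhat s' y * V y|
        ≤ ∑ y ∈ Finset.univ.filter fun y => fhat y = s', qhat s' y * supNorm V := by
      refine le_trans (Finset.abs_sum_le_sum_abs _ _) (Finset.sum_le_sum fun y _ => ?_)
      rw [abs_mul, abs_of_nonneg ((hqhat s').1 y)]
      exact mul_le_mul_of_nonneg_left (hVle y) ((hqhat s').1 y)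
    have h2 : ∑ y ∈ Finset.univ.filter fun y => fhat y = s', qhat s' y ≤ 1 := by
      refine le_trans (Finset.sum_le_sum_of_subset_of_nonneg
        (Finset.filter_subset _ _) (fun y _ _ => (hqhat s').1 y)) (hqhat s').2.2
    calc |∑ y ∈ Finset.univ.filter fun y => fhat y = s', qhat s' y * V y|
        ≤ (∑ y ∈ Finset.univ.filter fun y => fhat y = s', qhat s' y) * supNorm V := by
          rw [Finset.sum_mul]; exact h1
      _ ≤ 1 * supNorm V := mul_le_mul_of_nonneg_right h2 hV0
      _ = supNorm V := one_mul _
  have hB : |∑ s', (p (fhat x) a s' - phat (fhat x) a s') *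
        ∑ y ∈ Finset.univ.filter fun y => fhat y = s', qhat s' y * V y|
      ≤ Mp * supNorm V := by
    refine le_trans (Finset.abs_sum_le_sum_abs _ _) ?_
    have : ∀ s' ∈ Finset.univ, |(p (fhat x) a s' - phat (fhat x) a s') *
        ∑ y ∈ Finset.univ.filter fun y => fhat y = s', qhat s' y * V y|
        ≤ |phat (fhat x) a s' - p (fhat x) a s'| * supNorm V := by
      intro s' _
      rw [abs_mul, abs_sub_comm]
      exact mul_le_mul_of_nonneg_left (hBin s') (abs_nonneg _)
    refine le_trans (Finset.sum_le_sum this) ?_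
    rw [← Finset.sum_mul]
    refine mul_le_mul_of_nonneg_right ?_ hV0
    exact Finset.le_sup' (fun s : S => ∑ s', |phat s a s' - p s a s'|) (Finset.mem_univ (fhat x))
  -- bound for each inner emission term
  have hAin : ∀ s' : S,
      |∑ y ∈ Finset.univ.filter fun y => fhat y = s', (q s' y - qhat s' y) * V y|
      ≤ Mq + κ * (E.card : ℝ) / n * supNorm V := by
    intro s'
    have hsplit : ∑ y ∈ Finset.univ.filter fun y => fhat y = s', (q s' y - qhat s' y) * V y
        = (∑ y, (q s' y - qhat s' y) * V y)
          - ∑ y ∈ Finset.univ.filter fun y => fhat y ≠ s', q s' y * V y := by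
      rw [← Finset.sum_filter_add_sum_filter_not Finset.univ (fun y => fhat y = s')
        (fun y => (q s' y - qhat s' y) * V y)]
      have : ∑ y ∈ Finset.univ.filter fun y => ¬ fhat y = s', (q s' y - qhat s' y) * V y
          = ∑ y ∈ Finset.univ.filter fun y => fhat y ≠ s', q s' y * V y := by
        refine Finset.sum_congr rfl fun y hy => ?_
        rw [(hqhat s').2.1 y (Finset.mem_filter.mp hy).2]
        ring
      rw [this]; ring
    rw [hsplit]
    refine le_trans (abs_sub _ _) (add_le_add ?_ ?_)
    · have : |∑ y, (q s' y - qhat s' y) * V y| = |∑ y, (qhat s' y - q s' y) * V y| := by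
        rw [← abs_neg, ← Finset.sum_neg_distrib]
        exact congrArg abs (Finset.sum_congr rfl fun y _ => by ring)
      rw [this]
      exact Finset.le_sup' (fun s : S => |∑ y, (qhat s y - q s y) * V y|) (Finset.mem_univ s')
    · -- off-fiber sum bounded by κ|E|/n ‖V‖
      refine le_trans (Finset.abs_sum_le_sum_abs _ _) ?_
      have hzero : ∑ y ∈ Finset.univ.filter fun y => fhat y ≠ s', |q s' y * V y|
          = ∑ y ∈ (Finset.univ.filter fun y => fhat y ≠ s').filter fun y => f y = s',
              |q s' y * V y| := by
        refine (Finset.sum_subset (Finset.filter_subset _ _) fun y hy hy' => ?_).symm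
        have : f y ≠ s' := fun h => hy' (Finset.mem_filter.mpr ⟨hy, h⟩)
        rw [(hq s').2.1 y this, zero_mul, abs_zero]
      rw [hzero]
      have hsub : ((Finset.univ.filter fun y => fhat y ≠ s').filter fun y => f y = s') ⊆ E := by
        intro y hy
        have h1 := Finset.mem_filter.mp hy
        have h2 := (Finset.mem_filter.mp h1.1).2
        refine Finset.mem_filter.mpr ⟨Finset.mem_univ y, ?_⟩
        rw [h1.2]; exact h2
      have hterm : ∀ y ∈ ((Finset.univ.filter fun y => fhat y ≠ s').filter fun y => f y = s'),
          |q s' y * V y| ≤ κ / n * supNorm V := by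
        intro y _
        rw [abs_mul, abs_of_nonneg ((hq s').1 y)]
        exact mul_le_mul (hqbound s' y) (hVle y) (abs_nonneg _)
          (div_nonneg hκ.le hn0.le)
      refine le_trans (Finset.sum_le_sum hterm) ?_
      rw [Finset.sum_const, nsmul_eq_mul]
      have hcard : (((Finset.univ.filter fun y => fhat y ≠ s').filter
          fun y => f y = s').card : ℝ) ≤ (E.card : ℝ) := by
        exact_mod_cast Finset.card_le_card hsub
      calc (((Finset.univ.filter fun y => fhat y ≠ s').filter fun y => f y = s').card : ℝ)
            * (κ / n * supNorm V)
          ≤ (E.card : ℝ) * (κ / n * supNorm V) := by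
            refine mul_le_mul_of_nonneg_right hcard ?_
            exact mul_nonneg (div_nonneg hκ.le hn0.le) hV0
        _ = κ * (E.card : ℝ) / n * supNorm V := by ring
  -- assemble the bound on A
  have hA : |∑ s', p (fhat x) a s' *
        ∑ y ∈ Finset.univ.filter fun y => fhat y = s', (q s' y - qhat s' y) * V y|
      ≤ Mq + κ * (E.card : ℝ) / n * supNorm V := by
    refine le_trans (Finset.abs_sum_le_sum_abs _ _) ?_
    have hstep : ∀ s' ∈ Finset.univ, |p (fhat x) a s' *
        ∑ y ∈ Finset.univ.filter fun y => fhat y = s', (q s' y - qhat s' y) * V y|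
        ≤ p (fhat x) a s' * (Mq + κ * (E.card : ℝ) / n * supNorm V) := by
      intro s' _
      rw [abs_mul, abs_of_nonneg ((hp (fhat x) a).1 s')]
      exact mul_le_mul_of_nonneg_left (hAin s') ((hp (fhat x) a).1 s')
    refine le_trans (Finset.sum_le_sum hstep) ?_
    rw [← Finset.sum_mul, (hp (fhat x) a).2, one_mul]
  calc |∑ y, (q (fhat y) y * p (fhat x) a (fhat y)
        - qhat (fhat y) y * phat (fhat x) a (fhat y)) * V y|
      = |(∑ s', p (fhat x) a s' *
          ∑ y ∈ Finset.univ.filter fun y => fhat y = s', (q s' y - qhat s' y) * V y)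
        + ∑ s', (p (fhat x) a s' - phat (fhat x) a s') *
          ∑ y ∈ Finset.univ.filter fun y => fhat y = s', qhat s' y * V y| := by rw [key]
    _ ≤ _ + _ := abs_add_le _ _
    _ ≤ (Mq + κ * (E.card : ℝ) / n * supNorm V) + Mp * supNorm V := add_le_add hA hB
    _ = Mp * supNorm V + Mq + κ * (E.card : ℝ) / n * supNorm V := by ring
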